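/- arXiv:2311.03195 — 3 statements merged into one kernel-verified Lean document; each statement's English description precedes it below -/
import Mathlib

section
/- Let 1/2 < γ ≤ 1 and n ≥ 2, with all n players on the complete graph playing the symmetric coordination game with payoffs γ on (a,a), 1−γ on (b,b), and 0 otherwise. If a strategy profile is not the all-a profile, its welfare is at least min{2γ(n−1), n(n−1)(2γ−1)} less than the maximum welfare. -/
open Finset

/-- On the complete graph on `n ≥ 2` players with the symmetric coordination
game and `1/2 < γ ≤ 1`, any profile other than all-`a` has welfare at least
`min{2γ(n-1), n(n-1)(2γ-1)}` below the maximum (attained at all-`a`). -/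
theorem stmt_2 (n : ℕ) (hn : 2 ≤ n) (γ : ℝ) (hγ1 : 1/2 < γ) (hγ2 : γ ≤ 1)
    (u : Bool → Bool → ℝ)
    (huaa : u true true = γ) (hubb : u false false = 1 - γ)
    (huab : u true false = 0) (huba : u false true = 0)
    (W : (Fin n → Bool) → ℝ)
    (hW : ∀ s, W s = ∑ i : Fin n, ∑ j ∈ univ.erase i, u (s i) (s j)) :
    ∀ s : Fin n → Bool, s ≠ (fun _ => true) →
      W s ≤ W (fun _ => true) -
        min (2 * γ * ((n : ℝ) - 1)) ((n : ℝ) * ((n : ℝ) - 1) * (2 * γ - 1)) := by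
  intro s hs
  classical
  have hn1 : (1:ℕ) ≤ n := by omega
  -- welfare of the all-true profile
  have hWtop : W (fun _ => true) = (n:ℝ) * ((n:ℝ) - 1) * γ := by
    rw [hW]
    simp only [huaa]
    rw [Finset.sum_congr rfl (fun i _ => Finset.sum_const γ)]
    simp [card_erase_of_mem, card_univ, Nat.cast_sub hn1]
    ring
  set T : Finset (Fin n) := univ.filter (fun i => s i = true) with hT
  set F : Finset (Fin n) := univ.filter (fun i => ¬ s i = true) with hF
  set k := T.card with hkdef
  have hcards : T.card + F.card = n := by
    rw [hT, hF]
    rw [Finset.card_filter_add_card_filter_not]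
    simp
  have hkn : k ≤ n := by omega
  have hklt : k < n := by
    rcases lt_or_eq_of_le hkn with h | h
    · exact h
    · exfalso
      apply hs
      funext i
      have hTu : T = univ := Finset.eq_univ_of_card _ (by simp [← hkdef, h, card_univ])
      have : i ∈ T := hTu ▸ mem_univ i
      simpa [hT] using this
  have hFcard : F.card = n - k := by omega
  -- row sums
  have hrow : ∀ i : Fin n, ∑ j ∈ univ.erase i, u (s i) (s j)
      = if s i = true then ((k - 1 : ℕ):ℝ) * γ else ((n - k - 1 : ℕ):ℝ) * (1 - γ) := by
    intro i
    have hsplit : ∀ j, u (s i) (s j) = if s j = true then u (s i) true else u (s i) false := by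
      intro j; cases s j <;> simp
    rw [Finset.sum_congr rfl (fun j _ => hsplit j)]
    rw [Finset.sum_ite, Finset.sum_const, Finset.sum_const]
    have h1 : (univ.erase i).filter (fun j => s j = true) = T.erase i := by
      ext j
      simp only [hT, Finset.mem_erase, Finset.mem_filter, Finset.mem_univ, true_and]
      tauto
    have h2 : (univ.erase i).filter (fun j => ¬ s j = true) = F.erase i := by
      ext j
      simp only [hF, Finset.mem_erase, Finset.mem_filter, Finset.mem_univ, true_and]
      tauto
    rw [h1, h2]
    by_cases hi : s i = true
    · have hiT : i ∈ T := by simp [hT, hi]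
      have hiF : i ∉ F := by simp [hF, hi]
      rw [Finset.card_erase_of_mem hiT, Finset.erase_eq_of_notMem hiF]
      simp [hi, huaa, huab, hFcard, hkdef]
    · have hiT : i ∉ T := by simp [hT, hi]
      have hiF : i ∈ F := by simp [hF, hi]
      rw [Finset.erase_eq_of_notMem hiT, Finset.card_erase_of_mem hiF]
      have hsi : s i = false := by cases h : s i <;> simp_all
      simp [hi, hsi, huba, hubb, hFcard]
  -- total welfare in terms of k
  have hWs : W s = (k:ℝ) * ((k - 1 : ℕ):ℝ) * γ
      + ((n - k : ℕ):ℝ) * ((n - k - 1 : ℕ):ℝ) * (1 - γ) := by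
    rw [hW]
    rw [Finset.sum_congr rfl (fun i _ => hrow i)]
    rw [Finset.sum_ite, Finset.sum_const, Finset.sum_const]
    rw [show univ.filter (fun i => s i = true) = T from rfl]
    rw [show univ.filter (fun i => ¬ s i = true) = F from rfl]
    rw [hFcard]
    simp [nsmul_eq_mul]
    ring
  -- rewrite with real subtraction
  have hWs' : W s = (k:ℝ) * ((k:ℝ) - 1) * γ
      + ((n:ℝ) - k) * ((n:ℝ) - k - 1) * (1 - γ) := by
    rw [hWs]
    have h2 : ((n - k : ℕ):ℝ) = (n:ℝ) - k := by
      push_cast [Nat.cast_sub (le_of_lt hklt)]; ring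
    have h3 : ((n - k - 1 : ℕ):ℝ) = (n:ℝ) - k - 1 := by
      push_cast [Nat.cast_sub (by omega : 1 ≤ n - k), Nat.cast_sub (le_of_lt hklt)]; ring
    rw [h2, h3]
    rcases Nat.eq_zero_or_pos k with hk0 | hk1
    · simp [hk0]
    · have h1 : ((k - 1 : ℕ):ℝ) = (k:ℝ) - 1 := by
        push_cast [Nat.cast_sub hk1]; ring
      rw [h1]
  rw [hWs', hWtop]
  -- final arithmetic
  have hA : min (2 * γ * ((n : ℝ) - 1)) ((n : ℝ) * ((n : ℝ) - 1) * (2 * γ - 1))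
      ≤ 2 * γ * ((n : ℝ) - 1) := min_le_left _ _
  have hB : min (2 * γ * ((n : ℝ) - 1)) ((n : ℝ) * ((n : ℝ) - 1) * (2 * γ - 1))
      ≤ (n : ℝ) * ((n : ℝ) - 1) * (2 * γ - 1) := min_le_right _ _
  have hk0 : (0:ℝ) ≤ (k:ℝ) := Nat.cast_nonneg k
  have hkle : (k:ℝ) ≤ (n:ℝ) - 1 := by
    have : (k:ℝ) + 1 ≤ (n:ℝ) := by exact_mod_cast hklt
    linarith
  have hn2 : (2:ℝ) ≤ (n:ℝ) := by exact_mod_cast hn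
  nlinarith [mul_nonneg hk0 (sub_nonneg.mpr hB), mul_nonneg (sub_nonneg.mpr hkle) (sub_nonneg.mpr hA),
    mul_nonneg hk0 (sub_nonneg.mpr hkle), mul_nonneg (mul_nonneg hk0 (sub_nonneg.mpr hkle)) (by linarith : (0:ℝ) ≤ (n:ℝ) - 2)]
end

section
/- Let 0 ≤ γ < 1/2 and let n ≥ 2 players on the complete graph each pairwise play the symmetric coordination game with payoffs γ on (a,a), 1−γ on (b,b), and 0 otherwise. Then the all-b profile maximises welfare, and any other profile has welfare at least min{2(1−γ)(n−1), n(n−1)(1−2γ)} less than the maximum. -/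
open Finset

lemma ite_sum' {α : Type*} (T : Finset α) (P : Prop) [Decidable P] (f : α → ℝ) :
    (∑ j ∈ T, if P then f j else 0) = if P then ∑ j ∈ T, f j else 0 := by
  split <;> simp

lemma cast_pred_mul (k : ℕ) : ((k * (k - 1) : ℕ) : ℝ) = (k : ℝ) * ((k : ℝ) - 1) := by
  cases k with
  | zero => simp
  | succ j => push_cast [Nat.succ_sub_one]; ring

lemma pred_mul_nonneg (k : ℕ) : (0 : ℝ) ≤ (k : ℝ) * ((k : ℝ) - 1) := by
  rw [← cast_pred_mul]; positivity

lemma welfare_formula (n : ℕ) (γ : ℝ) (u : Bool → Bool → ℝ)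
    (huaa : u true true = γ) (hubb : u false false = 1 - γ)
    (huab : u true false = 0) (huba : u false true = 0)
    (s : Fin n → Bool) :
    ∑ i : Fin n, ∑ j ∈ univ.erase i, u (s i) (s j) =
      γ * (((univ.filter (fun i => s i = true)).card *
            ((univ.filter (fun i => s i = true)).card - 1) : ℕ) : ℝ)
      + (1 - γ) * (((univ.filter (fun i => s i = false)).card *
            ((univ.filter (fun i => s i = false)).card - 1) : ℕ) : ℝ) := by
  have hu : ∀ x y, u x y =
      (if x = true then (if y = true then γ else 0) else 0) +
      (if x = false then (if y = false then (1 - γ) else 0) else 0) := by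
    intro x y; cases x <;> cases y <;> simp [huaa, hubb, huab, huba]
  simp_rw [hu, Finset.sum_add_distrib]
  have key : ∀ (b : Bool) (c : ℝ),
      (∑ i : Fin n, ∑ j ∈ univ.erase i,
        if s i = b then (if s j = b then c else 0) else 0) =
      c * (((univ.filter (fun i => s i = b)).card *
            ((univ.filter (fun i => s i = b)).card - 1) : ℕ) : ℝ) := by
    intro b c
    simp_rw [ite_sum']
    rw [← Finset.sum_filter]
    have : ∀ i ∈ univ.filter (fun i => s i = b),
        (∑ j ∈ univ.erase i, if s j = b then c else 0) =
        (((univ.filter (fun i => s i = b)).card - 1 : ℕ) : ℝ) * c := by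
      intro i hi
      rw [← Finset.sum_filter, Finset.filter_erase, Finset.sum_const,
        Finset.card_erase_of_mem (by simpa using hi)]
      simp [nsmul_eq_mul]
    rw [Finset.sum_congr rfl this, Finset.sum_const, nsmul_eq_mul, Nat.cast_mul]
    ring
  rw [key true γ, key false (1 - γ)]

/-- On the complete graph on `n ≥ 2` players with the symmetric coordination
game and `0 ≤ γ < 1/2`, the all-`b` profile maximises welfare, and any other
profile has welfare at least `min{2(1-γ)(n-1), n(n-1)(1-2γ)}` below the
maximum. -/
theorem stmt_3 (n : ℕ) (hn : 2 ≤ n) (γ : ℝ) (hγ1 : 0 ≤ γ) (hγ2 : γ < 1/2)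
    (u : Bool → Bool → ℝ)
    (huaa : u true true = γ) (hubb : u false false = 1 - γ)
    (huab : u true false = 0) (huba : u false true = 0)
    (W : (Fin n → Bool) → ℝ)
    (hW : ∀ s, W s = ∑ i : Fin n, ∑ j ∈ univ.erase i, u (s i) (s j)) :
    (∀ s : Fin n → Bool, W s ≤ W (fun _ => false)) ∧
    (∀ s : Fin n → Bool, s ≠ (fun _ => false) →
      W s ≤ W (fun _ => false) -
        min (2 * (1 - γ) * ((n : ℝ) - 1)) ((n : ℝ) * ((n : ℝ) - 1) * (1 - 2 * γ))) := by
  -- extract the key data for any profile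
  have key : ∀ s : Fin n → Bool, ∃ k m : ℕ,
      k + m = n ∧
      (s ≠ (fun _ => false) → 1 ≤ k) ∧
      W s = γ * ((k : ℝ) * ((k : ℝ) - 1)) + (1 - γ) * ((m : ℝ) * ((m : ℝ) - 1)) := by
    intro s
    refine ⟨(univ.filter (fun i => s i = true)).card,
            (univ.filter (fun i => s i = false)).card, ?_, ?_, ?_⟩
    · simpa using Finset.card_filter_add_card_filter_not
        (s := (univ : Finset (Fin n))) (p := fun i => s i = true)
    · intro hs
      rw [Nat.one_le_iff_ne_zero, Ne, Finset.card_eq_zero, Finset.filter_eq_empty_iff]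
      intro h
      apply hs
      funext i
      have := h (Finset.mem_univ i)
      simpa using this
    · rw [hW, welfare_formula n γ u huaa hubb huab huba s, cast_pred_mul, cast_pred_mul]
  have hWfalse : W (fun _ => false) = (1 - γ) * ((n : ℝ) * ((n : ℝ) - 1)) := by
    obtain ⟨k, m, hkm, _, hWs⟩ := key (fun _ => false)
    have hk : (univ.filter (fun i : Fin n => false = true)).card = 0 := by simp
    -- recompute directly instead
    rw [hW, welfare_formula n γ u huaa hubb huab huba, cast_pred_mul, cast_pred_mul]
    simp [Finset.filter_true_of_mem, Finset.card_univ]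
  constructor
  · intro s
    obtain ⟨k, m, hkm, _, hWs⟩ := key s
    rw [hWs, hWfalse]
    have hn' : (n : ℝ) = (k : ℝ) + (m : ℝ) := by exact_mod_cast hkm.symm
    rw [hn']
    nlinarith [pred_mul_nonneg k, pred_mul_nonneg m,
      mul_nonneg (Nat.cast_nonneg (α := ℝ) k) (Nat.cast_nonneg (α := ℝ) m)]
  · intro s hs
    obtain ⟨k, m, hkm, hk1, hWs⟩ := key s
    have hk1 := hk1 hs
    have hn' : (n : ℝ) = (k : ℝ) + (m : ℝ) := by exact_mod_cast hkm.symm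
    have hk1' : (1 : ℝ) ≤ (k : ℝ) := by exact_mod_cast hk1
    rw [hWs, hWfalse]
    rcases Nat.eq_zero_or_pos m with h0 | h1
    · have hmin := min_le_right (2 * (1 - γ) * ((n : ℝ) - 1))
        ((n : ℝ) * ((n : ℝ) - 1) * (1 - 2 * γ))
      have hm0 : (m : ℝ) = 0 := by exact_mod_cast h0
      have hkn : (k : ℝ) = (n : ℝ) := by rw [hn', hm0]; ring
      rw [hm0, hkn]
      nlinarith
    · have hmin := min_le_left (2 * (1 - γ) * ((n : ℝ) - 1))
        ((n : ℝ) * ((n : ℝ) - 1) * (1 - 2 * γ))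
      have hm1' : (1 : ℝ) ≤ (m : ℝ) := by exact_mod_cast h1
      have hkm' : (n : ℝ) - 1 ≤ (k : ℝ) * (m : ℝ) := by nlinarith
      rw [show (1 - γ) * ((n : ℝ) * ((n : ℝ) - 1)) =
          (1 - γ) * ((k : ℝ) * ((k : ℝ) - 1) + (m : ℝ) * ((m : ℝ) - 1)
            + 2 * ((k : ℝ) * (m : ℝ))) from by rw [hn']; ring]
      nlinarith [pred_mul_nonneg k, pred_mul_nonneg m,
        mul_le_mul_of_nonneg_left hkm' (by linarith : (0:ℝ) ≤ 2 * (1 - γ))]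
end

section
/- For any oriented graph D with matrices on arcs satisfying diagonal dominance (m_{aa} + m_{bb} ≥ m_{ab} + m_{ba} for every arc matrix), and the auxiliary weighted graph H constructed by the min-cut reduction (with added vertices x and y), every (x,y)-cut (X ∪ {x}, Y ∪ {y}) of H has w-weight equal to −ξ^P(D), where P = (X, Y) is the corresponding partition of V(D). -/
open Finset

/-- Min-cut reduction for diagonally dominant arc matrices: for an oriented
graph with arc set `A` and arc matrices `m i j` (entries indexed by `Bool`,
`true` = part containing `x`, i.e. `X_a`), the `w`-weight of the `(x,y)`-cut
determined by a partition `P` of the vertices equals `-ξ^P(D)`.  The cut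
weight is the sum over arcs of: the edge weight
`(m_aa + m_bb - m_ab - m_ba)/2` if the arc is cut, the contributions
`-m_bb/2` on `x`-edges to endpoints on the `y`-side, and the contributions
`(m_ba - m_aa - m_ab)/2`, `(m_ab - m_aa - m_ba)/2` on `y`-edges to endpoints
on the `x`-side. -/
theorem stmt_18 {V : Type} [DecidableEq V]
    (A : Finset (V × V))
    (horiented : ∀ p ∈ A, p.1 ≠ p.2 ∧ (p.2, p.1) ∉ A)
    (m : V → V → Bool → Bool → ℝ)
    (hdiag : ∀ p ∈ A, m p.1 p.2 true true + m p.1 p.2 false false ≥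
      m p.1 p.2 true false + m p.1 p.2 false true)
    (P : V → Bool)
    (cutWeight : ℝ)
    (hcut : cutWeight = ∑ p ∈ A,
      ((if P p.1 ≠ P p.2 then
          (m p.1 p.2 true true + m p.1 p.2 false false
            - m p.1 p.2 true false - m p.1 p.2 false true) / 2 else 0)
        + (if P p.1 = false then -(m p.1 p.2 false false) / 2 else 0)
        + (if P p.2 = false then -(m p.1 p.2 false false) / 2 else 0)
        + (if P p.1 = true then
            (m p.1 p.2 false true - m p.1 p.2 true true - m p.1 p.2 true false) / 2 else 0)
        + (if P p.2 = true then
            (m p.1 p.2 true false - m p.1 p.2 true true - m p.1 p.2 false true) / 2 else 0))) :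
    cutWeight = -(∑ p ∈ A, m p.1 p.2 (P p.1) (P p.2)) := by
  rw [hcut, ← Finset.sum_neg_distrib]
  refine Finset.sum_congr rfl fun p _ => ?_
  cases h1 : P p.1 <;> cases h2 : P p.2 <;> simp [h1, h2] <;> ring
end
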